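/- Let α ∈ ℝ with |α| ≥ 1, b' < b, and ξ₁, ξ₂ : [b', b] → ℂ continuous. With ζ₁, ζ₂ defined as the explicit integral solutions of the system ξ₁ = iαζ₁ + ζ₂', ξ₂ = ζ₁' − iαζ₂ with ζ₁(b) = ζ₂(b) = 0, there exists a constant C (independent of α, ξ₁, ξ₂) such that |ζ_j(y)| ≤ C·(‖ξ₁‖_{L^∞(b',b)} + ‖ξ₂‖_{L^∞(b',b)})·(1/|α|)·e^{|α|(b−y)} for all y ∈ [b', b] and j = 1, 2. -/

import Mathlib

open Complex intervalIntegral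

lemma exp_int_eval (α b y : ℝ) (hα : (0:ℝ) < |α|) :
    ∫ t in y..b, Real.exp (|α| * (t - y)) = (Real.exp (|α| * (b - y)) - 1) / |α| := by
  have h : ∀ t ∈ Set.uIcc y b,
      HasDerivAt (fun t => Real.exp (|α| * (t - y)) / |α|) (Real.exp (|α| * (t - y))) t := by
    intro t _
    have h1 : HasDerivAt (fun t => |α| * (t - y)) |α| t := by
      simpa using ((hasDerivAt_id t).sub_const y).const_mul |α|
    have h2 := (Real.hasDerivAt_exp (|α| * (t - y))).comp t h1
    have h3 := h2.div_const |α|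
    simpa [mul_div_assoc, div_self hα.ne'] using h3
  rw [intervalIntegral.integral_eq_sub_of_hasDerivAt h
    ((Real.continuous_exp.comp (by continuity)).intervalIntegrable y b)]
  field_simp
  simp

lemma term_bound (α b y : ℝ) (hα : 1 ≤ |α|) (hy : y ≤ b) (ξ : ℝ → ℂ) (M : ℝ)
    (hξ : ContinuousOn ξ (Set.Icc y b)) (hM : ∀ t ∈ Set.Icc y b, ‖ξ t‖ ≤ M)
    (c : ℂ) (hc : c = (α : ℂ) ∨ c = -(α : ℂ)) :
    ‖Complex.exp (c * (y - b)) * ∫ t in y..b, Complex.exp (-c * (t - b)) * ξ t‖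
      ≤ M * (1 / |α| * Real.exp (|α| * (b - y))) := by
  have hα0 : (0:ℝ) < |α| := lt_of_lt_of_le one_pos hα
  have hM0 : 0 ≤ M := le_trans (norm_nonneg _) (hM y ⟨le_rfl, hy⟩)
  rw [← intervalIntegral.integral_const_mul]
  have key : ∀ t : ℝ, Complex.exp (c * (y - b)) * (Complex.exp (-c * (t - b)) * ξ t)
      = Complex.exp (c * ((y : ℂ) - t)) * ξ t := by
    intro t
    rw [← mul_assoc, ← Complex.exp_add]
    congr 2
    ring
  simp_rw [key]
  have hpt : ∀ᵐ (t : ℝ) ∂(MeasureTheory.volume.restrict (Set.uIoc y b)),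
      ‖Complex.exp (c * ((y : ℂ) - t)) * ξ t‖ ≤ M * Real.exp (|α| * (t - y)) := by
    refine Filter.eventually_of_mem (MeasureTheory.self_mem_ae_restrict measurableSet_uIoc) ?_
    intro t ht
    rw [Set.uIoc_of_le hy] at ht
    have hty : y ≤ t := le_of_lt ht.1
    have hre : (c * ((y : ℂ) - t)).re ≤ |α| * (t - y) := by
      rcases hc with rfl | rfl
      · have : ((α : ℂ) * ((y : ℂ) - t)).re = α * (y - t) := by simp
        rw [this]
        nlinarith [mul_nonneg (show (0:ℝ) ≤ |α| + α by linarith [neg_abs_le α])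
          (sub_nonneg.mpr hty)]
      · have : ((-(α : ℂ)) * ((y : ℂ) - t)).re = -α * (y - t) := by simp
        rw [this]
        nlinarith [mul_nonneg (show (0:ℝ) ≤ |α| - α by linarith [le_abs_self α])
          (sub_nonneg.mpr hty)]
    rw [norm_mul, Complex.norm_exp]
    have h1 : Real.exp (c * ((y:ℂ) - t)).re ≤ Real.exp (|α| * (t - y)) := Real.exp_le_exp.mpr hre
    have h2 : ‖ξ t‖ ≤ M := hM t ⟨hty, ht.2⟩
    calc Real.exp (c * ((y:ℂ) - t)).re * ‖ξ t‖
        ≤ Real.exp (|α| * (t - y)) * M := by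
          exact mul_le_mul h1 h2 (norm_nonneg _) (Real.exp_nonneg _)
      _ = M * Real.exp (|α| * (t - y)) := mul_comm _ _
  have hgi : IntervalIntegrable (fun t => M * Real.exp (|α| * (t - y)))
      MeasureTheory.volume y b :=
    (continuous_const.mul (Real.continuous_exp.comp (by continuity))).intervalIntegrable y b
  calc ‖∫ t in y..b, Complex.exp (c * ((y : ℂ) - t)) * ξ t‖
      ≤ |∫ t in y..b, M * Real.exp (|α| * (t - y))| :=
        intervalIntegral.norm_integral_le_abs_of_norm_le hpt hgi
    _ = |M * ((Real.exp (|α| * (b - y)) - 1) / |α|)| := by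
        rw [intervalIntegral.integral_const_mul, exp_int_eval α b y hα0]
    _ ≤ M * (1 / |α| * Real.exp (|α| * (b - y))) := by
        have hnn : (0:ℝ) ≤ M * ((Real.exp (|α| * (b - y)) - 1) / |α|) := by
          apply mul_nonneg hM0
          apply div_nonneg _ hα0.le
          nlinarith [Real.add_one_le_exp (|α| * (b - y)),
            mul_nonneg (abs_nonneg α) (sub_nonneg.mpr hy)]
        rw [_root_.abs_of_nonneg hnn]
        rw [div_eq_mul_one_div, ← mul_assoc]
        have : Real.exp (|α| * (b - y)) - 1 ≤ Real.exp (|α| * (b - y)) := by linarith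
        calc M * (Real.exp (|α| * (b - y)) - 1) * (1 / |α|)
            ≤ M * Real.exp (|α| * (b - y)) * (1 / |α|) := by
              apply mul_le_mul_of_nonneg_right (mul_le_mul_of_nonneg_left this hM0) (by positivity)
          _ = M * (1 / |α| * Real.exp (|α| * (b - y))) := by ring

lemma exp_int_eval2 (α b y : ℝ) (hα : (0:ℝ) < |α|) :
    ∫ t in y..b, Real.exp (|α| * (b - t)) = (Real.exp (|α| * (b - y)) - 1) / |α| := by
  have h : ∀ t ∈ Set.uIcc y b,
      HasDerivAt (fun t => -(Real.exp (|α| * (b - t)) / |α|)) (Real.exp (|α| * (b - t))) t := by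
    intro t _
    have h1 : HasDerivAt (fun t : ℝ => |α| * (b - t)) (-|α|) t := by
      simpa using ((hasDerivAt_id t).const_sub b).const_mul |α|
    have h2 := (Real.hasDerivAt_exp (|α| * (b - t))).comp t h1
    have h3 := (h2.div_const |α|).neg
    have he : -(-(Real.exp (|α| * (b - t)) * |α|) / |α|) = Real.exp (|α| * (b - t)) := by
      field_simp
    rw [← he]
    refine h3.congr_deriv ?_
    ring
  rw [intervalIntegral.integral_eq_sub_of_hasDerivAt h
    ((Real.continuous_exp.comp (by continuity)).intervalIntegrable y b)]
  field_simp
  ring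
  simp

lemma int_bound (α b y : ℝ) (hα : 1 ≤ |α|) (hy : y ≤ b) (ξ : ℝ → ℂ) (M : ℝ)
    (hM : ∀ t ∈ Set.Icc y b, ‖ξ t‖ ≤ M)
    (c : ℂ) (hc : c = (α : ℂ) ∨ c = -(α : ℂ)) :
    ‖∫ t in y..b, Complex.exp (-c * (t - b)) * ξ t‖
      ≤ M * (1 / |α| * Real.exp (|α| * (b - y))) := by
  have hα0 : (0:ℝ) < |α| := lt_of_lt_of_le one_pos hα
  have hM0 : 0 ≤ M := le_trans (norm_nonneg _) (hM y ⟨le_rfl, hy⟩)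
  have hpt : ∀ᵐ (t : ℝ) ∂(MeasureTheory.volume.restrict (Set.uIoc y b)),
      ‖Complex.exp (-c * (t - b)) * ξ t‖ ≤ M * Real.exp (|α| * (b - t)) := by
    refine Filter.eventually_of_mem (MeasureTheory.self_mem_ae_restrict measurableSet_uIoc) ?_
    intro t ht
    rw [Set.uIoc_of_le hy] at ht
    have htb : t ≤ b := ht.2
    have hre : (-c * ((t : ℂ) - b)).re ≤ |α| * (b - t) := by
      rcases hc with rfl | rfl
      · have : (-(α : ℂ) * ((t : ℂ) - b)).re = -α * (t - b) := by simp
        rw [this]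
        nlinarith [mul_nonneg (show (0:ℝ) ≤ |α| - α by linarith [le_abs_self α])
          (sub_nonneg.mpr htb)]
      · have : (-(-(α : ℂ)) * ((t : ℂ) - b)).re = α * (t - b) := by simp
        rw [this]
        nlinarith [mul_nonneg (show (0:ℝ) ≤ |α| + α by linarith [neg_abs_le α])
          (sub_nonneg.mpr htb)]
    rw [norm_mul, Complex.norm_exp]
    have h1 : Real.exp (-c * ((t:ℂ) - b)).re ≤ Real.exp (|α| * (b - t)) := Real.exp_le_exp.mpr hre
    have h2 : ‖ξ t‖ ≤ M := hM t ⟨le_of_lt ht.1, htb⟩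
    calc Real.exp (-c * ((t:ℂ) - b)).re * ‖ξ t‖
        ≤ Real.exp (|α| * (b - t)) * M :=
          mul_le_mul h1 h2 (norm_nonneg _) (Real.exp_nonneg _)
      _ = M * Real.exp (|α| * (b - t)) := mul_comm _ _
  have hgi : IntervalIntegrable (fun t => M * Real.exp (|α| * (b - t)))
      MeasureTheory.volume y b :=
    (continuous_const.mul (Real.continuous_exp.comp (by continuity))).intervalIntegrable y b
  calc ‖∫ t in y..b, Complex.exp (-c * (t - b)) * ξ t‖
      ≤ |∫ t in y..b, M * Real.exp (|α| * (b - t))| :=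
        intervalIntegral.norm_integral_le_abs_of_norm_le hpt hgi
    _ = |M * ((Real.exp (|α| * (b - y)) - 1) / |α|)| := by
        rw [intervalIntegral.integral_const_mul, exp_int_eval2 α b y hα0]
    _ ≤ M * (1 / |α| * Real.exp (|α| * (b - y))) := by
        have hnn : (0:ℝ) ≤ M * ((Real.exp (|α| * (b - y)) - 1) / |α|) := by
          apply mul_nonneg hM0
          apply div_nonneg _ hα0.le
          nlinarith [Real.add_one_le_exp (|α| * (b - y)),
            mul_nonneg (abs_nonneg α) (sub_nonneg.mpr hy)]
        rw [_root_.abs_of_nonneg hnn]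
        rw [div_eq_mul_one_div, ← mul_assoc]
        have : Real.exp (|α| * (b - y)) - 1 ≤ Real.exp (|α| * (b - y)) := by linarith
        calc M * (Real.exp (|α| * (b - y)) - 1) * (1 / |α|)
            ≤ M * Real.exp (|α| * (b - y)) * (1 / |α|) := by
              apply mul_le_mul_of_nonneg_right (mul_le_mul_of_nonneg_left this hM0) (by positivity)
          _ = M * (1 / |α| * Real.exp (|α| * (b - y))) := by ring

lemma split_add (y b : ℝ) (f : ℝ → ℂ)
    (hf : IntervalIntegrable f MeasureTheory.volume y b) (X : ℂ) :
    (∫ t in y..b, (f t + X)) = (∫ t in y..b, f t) + ((b - y : ℝ) : ℂ) * X := by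
  rw [intervalIntegral.integral_add hf intervalIntegrable_const,
    intervalIntegral.integral_const, Complex.real_smul]

lemma split_sub (y b : ℝ) (f : ℝ → ℂ)
    (hf : IntervalIntegrable f MeasureTheory.volume y b) (X : ℂ) :
    (∫ t in y..b, (f t - X)) = (∫ t in y..b, f t) - ((b - y : ℝ) : ℂ) * X := by
  rw [intervalIntegral.integral_sub hf intervalIntegrable_const,
    intervalIntegral.integral_const, Complex.real_smul]

lemma bound4a (u v w z : ℂ) (l : ℝ) (hl : 0 ≤ l) :
    ‖-(Complex.I / 2) * u + (l : ℂ) / 4 * v - (l : ℂ) ^ 2 / 8 * w + (l : ℂ) ^ 3 / 16 * z‖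
      ≤ 1 / 2 * ‖u‖ + l / 4 * ‖v‖ + l ^ 2 / 8 * ‖w‖ + l ^ 3 / 16 * ‖z‖ := by
  calc ‖-(Complex.I / 2) * u + (l : ℂ) / 4 * v - (l : ℂ) ^ 2 / 8 * w + (l : ℂ) ^ 3 / 16 * z‖
      ≤ ‖-(Complex.I / 2) * u‖ + ‖(l : ℂ) / 4 * v‖ + ‖(l : ℂ) ^ 2 / 8 * w‖
          + ‖(l : ℂ) ^ 3 / 16 * z‖ := by
        refine le_trans (norm_add_le _ _) ?_
        gcongr
        refine le_trans (norm_sub_le _ _) ?_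
        gcongr
        exact norm_add_le _ _
    _ = 1 / 2 * ‖u‖ + l / 4 * ‖v‖ + l ^ 2 / 8 * ‖w‖ + l ^ 3 / 16 * ‖z‖ := by
        simp [norm_mul, norm_div, norm_pow, Complex.norm_I, Complex.norm_real,
          Real.norm_eq_abs, _root_.abs_of_nonneg hl]

lemma bound4b (u v w z : ℂ) (l : ℝ) (hl : 0 ≤ l) :
    ‖-(1 / 2 : ℂ) * u + (l : ℂ) / 4 * v + Complex.I * (l : ℂ) ^ 2 / 8 * w
        + (l : ℂ) ^ 3 / 16 * z‖
      ≤ 1 / 2 * ‖u‖ + l / 4 * ‖v‖ + l ^ 2 / 8 * ‖w‖ + l ^ 3 / 16 * ‖z‖ := by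
  calc ‖-(1 / 2 : ℂ) * u + (l : ℂ) / 4 * v + Complex.I * (l : ℂ) ^ 2 / 8 * w
        + (l : ℂ) ^ 3 / 16 * z‖
      ≤ ‖-(1 / 2 : ℂ) * u‖ + ‖(l : ℂ) / 4 * v‖ + ‖Complex.I * (l : ℂ) ^ 2 / 8 * w‖
          + ‖(l : ℂ) ^ 3 / 16 * z‖ := by
        refine le_trans (norm_add_le _ _) ?_
        gcongr
        refine le_trans (norm_add_le _ _) ?_
        gcongr
        exact norm_add_le _ _
    _ = 1 / 2 * ‖u‖ + l / 4 * ‖v‖ + l ^ 2 / 8 * ‖w‖ + l ^ 3 / 16 * ‖z‖ := by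
        simp [norm_mul, norm_div, norm_pow, Complex.norm_I, Complex.norm_real,
          Real.norm_eq_abs, _root_.abs_of_nonneg hl]

/-- The first potential function of the modewise Helmholtz decomposition. -/
noncomputable def zeta1 (α b : ℝ) (ξ₁ ξ₂ : ℝ → ℂ) (y : ℝ) : ℂ :=
  -(Complex.I / 2) * Complex.exp ((α : ℂ) * (y - b))
      * ∫ t in y..b, Complex.exp (-(α : ℂ) * (t - b)) * ξ₁ t
    + (Complex.I / 2) * Complex.exp (-(α : ℂ) * (y - b))
      * ∫ t in y..b, Complex.exp ((α : ℂ) * (t - b)) * ξ₁ t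
    - (1 / 2) * Complex.exp ((α : ℂ) * (y - b))
      * ∫ t in y..b, Complex.exp (-(α : ℂ) * (t - b)) * ξ₂ t
    - (1 / 2) * Complex.exp (-(α : ℂ) * (y - b))
      * ∫ t in y..b, Complex.exp ((α : ℂ) * (t - b)) * ξ₂ t

/-- The second potential function of the modewise Helmholtz decomposition. -/
noncomputable def zeta2 (α b : ℝ) (ξ₁ ξ₂ : ℝ → ℂ) (y : ℝ) : ℂ :=
  -(1 / 2) * Complex.exp ((α : ℂ) * (y - b))
      * ∫ t in y..b, Complex.exp (-(α : ℂ) * (t - b)) * ξ₁ t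
    - (1 / 2) * Complex.exp (-(α : ℂ) * (y - b))
      * ∫ t in y..b, Complex.exp ((α : ℂ) * (t - b)) * ξ₁ t
    + (Complex.I / 2) * Complex.exp ((α : ℂ) * (y - b))
      * ∫ t in y..b, Complex.exp (-(α : ℂ) * (t - b)) * ξ₂ t
    - (Complex.I / 2) * Complex.exp (-(α : ℂ) * (y - b))
      * ∫ t in y..b, Complex.exp ((α : ℂ) * (t - b)) * ξ₂ t

set_option maxHeartbeats 1000000 in
/-- Uniform bound for the potentials `ζ₁, ζ₂` in terms of the sup norms of the data. -/
theorem zeta_bound (b' b : ℝ) (hb : b' < b) :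
    ∃ C > 0, ∀ (α : ℝ), 1 ≤ |α| → ∀ (ξ₁ ξ₂ : ℝ → ℂ) (M₁ M₂ : ℝ),
      ContinuousOn ξ₁ (Set.Icc b' b) → ContinuousOn ξ₂ (Set.Icc b' b) →
      (∀ t ∈ Set.Icc b' b, ‖ξ₁ t‖ ≤ M₁) → (∀ t ∈ Set.Icc b' b, ‖ξ₂ t‖ ≤ M₂) →
      ∀ y ∈ Set.Icc b' b,
        ‖zeta1 α b ξ₁ ξ₂ y‖ ≤ C * (M₁ + M₂) * (1 / |α|) * Real.exp (|α| * (b - y)) ∧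
        ‖zeta2 α b ξ₁ ξ₂ y‖ ≤ C * (M₁ + M₂) * (1 / |α|) * Real.exp (|α| * (b - y)) := by
  refine ⟨1 + (b - b') + (b - b') ^ 2 + (b - b') ^ 3, by
    nlinarith [pow_pos (show (0:ℝ) < b - b' by linarith) 2,
      pow_pos (show (0:ℝ) < b - b' by linarith) 3], ?_⟩
  intro α hα ξ₁ ξ₂ M₁ M₂ hc1 hc2 hM1 hM2 y hy
  obtain ⟨hy1, hy2⟩ := hy
  have hsub : Set.Icc y b ⊆ Set.Icc b' b := Set.Icc_subset_Icc hy1 le_rfl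
  have hM1' : ∀ t ∈ Set.Icc y b, ‖ξ₁ t‖ ≤ M₁ := fun t ht => hM1 t (hsub ht)
  have hM2' : ∀ t ∈ Set.Icc y b, ‖ξ₂ t‖ ≤ M₂ := fun t ht => hM2 t (hsub ht)
  have hcont : ∀ (ξ : ℝ → ℂ), ContinuousOn ξ (Set.Icc b' b) → ∀ c : ℂ,
      IntervalIntegrable (fun t : ℝ => Complex.exp (c * (t - b)) * ξ t)
        MeasureTheory.volume y b := by
    intro ξ hξ c
    apply ContinuousOn.intervalIntegrable
    rw [Set.uIcc_of_le hy2]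
    exact ((Complex.continuous_exp.comp (by continuity)).continuousOn).mul (hξ.mono hsub)
  have hi1 := hcont ξ₁ hc1 (-(α : ℂ))
  have hi2 := hcont ξ₁ hc1 ((α : ℂ))
  have hi3 := hcont ξ₂ hc2 (-(α : ℂ))
  have hEE : Complex.exp (-(α : ℂ) * ((y : ℂ) - b))
      = (Complex.exp ((α : ℂ) * ((y : ℂ) - b)))⁻¹ := by
    rw [neg_mul, Complex.exp_neg]
  have h1 := term_bound α b y hα hy2 ξ₁ M₁ (hc1.mono hsub) hM1' (α : ℂ) (Or.inl rfl)
  have h3 := term_bound α b y hα hy2 ξ₂ M₂ (hc2.mono hsub) hM2' (α : ℂ) (Or.inl rfl)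
  have h2 := int_bound α b y hα hy2 ξ₁ M₁ hM1' (-(α : ℂ)) (Or.inr rfl)
  have h4 := int_bound α b y hα hy2 ξ₂ M₂ hM2' (-(α : ℂ)) (Or.inr rfl)
  rw [neg_neg] at h2 h4
  have hL0 : (0:ℝ) ≤ b - y := by linarith
  have hLD : b - y ≤ b - b' := by linarith
  have hM10 : 0 ≤ M₁ := le_trans (norm_nonneg _) (hM1' y ⟨le_rfl, hy2⟩)
  have hM20 : 0 ≤ M₂ := le_trans (norm_nonneg _) (hM2' y ⟨le_rfl, hy2⟩)
  have hK0 : (0:ℝ) ≤ 1 / |α| * Real.exp (|α| * (b - y)) := by positivity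
  have hfin : 1 / 2 * ‖Complex.exp ((α : ℂ) * ((y : ℂ) - b))
          * ∫ t in y..b, Complex.exp (-(α : ℂ) * (t - b)) * ξ₁ t‖
        + (b - y) / 4 * ‖∫ t in y..b, Complex.exp ((α : ℂ) * (t - b)) * ξ₁ t‖
        + (b - y) ^ 2 / 8 * ‖Complex.exp ((α : ℂ) * ((y : ℂ) - b))
          * ∫ t in y..b, Complex.exp (-(α : ℂ) * (t - b)) * ξ₂ t‖
        + (b - y) ^ 3 / 16 * ‖∫ t in y..b, Complex.exp ((α : ℂ) * (t - b)) * ξ₂ t‖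
      ≤ (1 + (b - b') + (b - b') ^ 2 + (b - b') ^ 3) * (M₁ + M₂) * (1 / |α|)
          * Real.exp (|α| * (b - y)) := by
    have hL2 : (b - y) ^ 2 ≤ (b - b') ^ 2 := pow_le_pow_left₀ hL0 hLD 2
    have hL3 : (b - y) ^ 3 ≤ (b - b') ^ 3 := pow_le_pow_left₀ hL0 hLD 3
    have hD0 : (0:ℝ) ≤ b - b' := by linarith
    have p2 : (b - y) * ‖∫ t in y..b, Complex.exp ((α : ℂ) * (t - b)) * ξ₁ t‖
        ≤ (b - b') * (M₁ * (1 / |α| * Real.exp (|α| * (b - y)))) :=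
      mul_le_mul hLD h2 (norm_nonneg _) hD0
    have p3 : (b - y) ^ 2 * ‖Complex.exp ((α : ℂ) * ((y : ℂ) - b))
          * ∫ t in y..b, Complex.exp (-(α : ℂ) * (t - b)) * ξ₂ t‖
        ≤ (b - b') ^ 2 * (M₂ * (1 / |α| * Real.exp (|α| * (b - y)))) :=
      mul_le_mul hL2 h3 (norm_nonneg _) (by positivity)
    have p4 : (b - y) ^ 3 * ‖∫ t in y..b, Complex.exp ((α : ℂ) * (t - b)) * ξ₂ t‖
        ≤ (b - b') ^ 3 * (M₂ * (1 / |α| * Real.exp (|α| * (b - y)))) :=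
      mul_le_mul hL3 h4 (norm_nonneg _) (by positivity)
    nlinarith [h1, mul_nonneg hM10 hK0, mul_nonneg hM20 hK0,
      mul_nonneg (mul_nonneg hD0 hM20) hK0,
      mul_nonneg (mul_nonneg (by positivity : (0:ℝ) ≤ (b - b') ^ 2) hM10) hK0,
      mul_nonneg (mul_nonneg (by positivity : (0:ℝ) ≤ (b - b') ^ 3) hM10) hK0,
      mul_nonneg (mul_nonneg hD0 hM10) hK0,
      mul_nonneg (mul_nonneg (by positivity : (0:ℝ) ≤ (b - b') ^ 2) hM20) hK0,
      mul_nonneg (mul_nonneg (by positivity : (0:ℝ) ≤ (b - b') ^ 3) hM20) hK0]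
  constructor
  · have hz1 : zeta1 α b ξ₁ ξ₂ y
        = -(Complex.I / 2) * (Complex.exp ((α : ℂ) * ((y : ℂ) - b))
              * ∫ t in y..b, Complex.exp (-(α : ℂ) * (t - b)) * ξ₁ t)
          + ((b - y : ℝ) : ℂ) / 4 * (∫ t in y..b, Complex.exp ((α : ℂ) * (t - b)) * ξ₁ t)
          - ((b - y : ℝ) : ℂ) ^ 2 / 8 * (Complex.exp ((α : ℂ) * ((y : ℂ) - b))
              * ∫ t in y..b, Complex.exp (-(α : ℂ) * (t - b)) * ξ₂ t)
          + ((b - y : ℝ) : ℂ) ^ 3 / 16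
              * ∫ t in y..b, Complex.exp ((α : ℂ) * (t - b)) * ξ₂ t := by
      rw [zeta1, split_sub y b _ hi3, split_sub y b _ hi2, split_add y b _ hi1]
      generalize (∫ t in y..b, Complex.exp (-(α : ℂ) * (t - b)) * ξ₁ t) = a1
      generalize (∫ t in y..b, Complex.exp ((α : ℂ) * (t - b)) * ξ₁ t) = a2
      generalize (∫ t in y..b, Complex.exp (-(α : ℂ) * (t - b)) * ξ₂ t) = b1
      generalize (∫ t in y..b, Complex.exp ((α : ℂ) * (t - b)) * ξ₂ t) = b2
      generalize ((b - y : ℝ) : ℂ) = l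
      have hef : Complex.exp ((α : ℂ) * ((y : ℂ) - b))
          * Complex.exp (-(α : ℂ) * ((y : ℂ) - b)) = 1 := by
        rw [← Complex.exp_add,
          show ((α : ℂ) * ((y : ℂ) - b) + -(α : ℂ) * ((y : ℂ) - b)) = 0 by ring,
          Complex.exp_zero]
      generalize hEe : Complex.exp ((α : ℂ) * ((y : ℂ) - b)) = e
      generalize hEf : Complex.exp (-(α : ℂ) * ((y : ℂ) - b)) = f
      rw [hEe, hEf] at hef
      linear_combination (((1:ℂ)/4)*l*a2 - (1/8)*l^2*e*b1 + (1/16)*l^3*b2*(e*f+1)) * hef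
        + (-(1/4)*l*a2*e*f + (1/8)*l^2*e*b1*e*f - (1/16)*l^3*b2*(e*f)^2) * Complex.I_sq
    rw [hz1]
    exact le_trans (bound4a _ _ _ _ (b - y) hL0) hfin
  · have hz2 : zeta2 α b ξ₁ ξ₂ y
        = -(1 / 2 : ℂ) * (Complex.exp ((α : ℂ) * ((y : ℂ) - b))
              * ∫ t in y..b, Complex.exp (-(α : ℂ) * (t - b)) * ξ₁ t)
          + ((b - y : ℝ) : ℂ) / 4 * (∫ t in y..b, Complex.exp ((α : ℂ) * (t - b)) * ξ₁ t)
          + Complex.I * ((b - y : ℝ) : ℂ) ^ 2 / 8 * (Complex.exp ((α : ℂ) * ((y : ℂ) - b))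
              * ∫ t in y..b, Complex.exp (-(α : ℂ) * (t - b)) * ξ₂ t)
          + ((b - y : ℝ) : ℂ) ^ 3 / 16
              * ∫ t in y..b, Complex.exp ((α : ℂ) * (t - b)) * ξ₂ t := by
      rw [zeta2, split_sub y b _ hi3, split_add y b _ hi2, split_sub y b _ hi1]
      generalize (∫ t in y..b, Complex.exp (-(α : ℂ) * (t - b)) * ξ₁ t) = a1
      generalize (∫ t in y..b, Complex.exp ((α : ℂ) * (t - b)) * ξ₁ t) = a2
      generalize (∫ t in y..b, Complex.exp (-(α : ℂ) * (t - b)) * ξ₂ t) = b1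
      generalize (∫ t in y..b, Complex.exp ((α : ℂ) * (t - b)) * ξ₂ t) = b2
      generalize ((b - y : ℝ) : ℂ) = l
      have hef : Complex.exp ((α : ℂ) * ((y : ℂ) - b))
          * Complex.exp (-(α : ℂ) * ((y : ℂ) - b)) = 1 := by
        rw [← Complex.exp_add,
          show ((α : ℂ) * ((y : ℂ) - b) + -(α : ℂ) * ((y : ℂ) - b)) = 0 by ring,
          Complex.exp_zero]
      generalize hEe : Complex.exp ((α : ℂ) * ((y : ℂ) - b)) = e
      generalize hEf : Complex.exp (-(α : ℂ) * ((y : ℂ) - b)) = f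
      rw [hEe, hEf] at hef
      linear_combination (((1:ℂ)/4)*l*a2 + (Complex.I/8)*l^2*e*b1 + (1/16)*l^3*b2*(e*f+1)) * hef
        + (-(1/16)*l^3*b2*(e*f)^2) * Complex.I_sq
    rw [hz2]
    exact le_trans (bound4b _ _ _ _ (b - y) hL0) hfin
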